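/- arXiv:1609.03514 — 3 statements merged into one kernel-verified Lean document; each statement's English description precedes it below -/
import Mathlib

section
/- Let 2 ≤ p < ∞, 0 < q < ∞, 0 < s < 1, and r + 1 - 2/p < ρ ≤ 1. If σ : ℤ → ℂ satisfies |σ(ξ)| ≤ C|ξ|^{-ρ} for ξ ≠ 0 and |σ(0)| ≤ C, then there is a constant C' such that for every 2π-periodic Hölder continuous f of order s with (∑_ξ |f̂(ξ)|^p)^{1/p} < ∞: (∑_{m=0}^{∞} 2^{mrq} ‖∑_{2^m ≤ |ξ| < 2^{m+1}} σ(ξ)f̂(ξ)e^{ix ξ}‖_{L^p(𝕋)}^q)^{1/q} ≤ C' ‖f‖_{Λ^s}. -/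
set_option maxHeartbeats 1000000

noncomputable def fourierCoef (f : ℝ → ℂ) (ξ : ℤ) : ℂ :=
  (1 / (2 * Real.pi)) * ∫ x in (0:ℝ)..(2 * Real.pi), f x * Complex.exp (-(Complex.I * (ξ:ℂ) * (x:ℂ)))

noncomputable def dyadicBlock (m : ℕ) : Finset ℤ :=
  (Finset.Icc (-(2^(m+1) : ℤ)) (2^(m+1))).filter fun ξ => 2^m ≤ |ξ| ∧ |ξ| < 2^(m+1)


section HLaux
open Complex intervalIntegral MeasureTheory Real


lemma integral_exp_int (k : ℤ) :
    (∫ x in (0:ℝ)..(2*Real.pi), Complex.exp (Complex.I * k * x))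
      = if k = 0 then (2*Real.pi : ℂ) else 0 := by
  by_cases hk : k = 0
  · simp [hk]
  · rw [if_neg hk]
    have hc : (Complex.I * k : ℂ) ≠ 0 :=
      mul_ne_zero Complex.I_ne_zero (by exact_mod_cast hk)
    have h := integral_exp_mul_complex (a := 0) (b := 2*Real.pi) hc
    simp only [mul_assoc] at h ⊢
    rw [h]
    have h1 : Complex.I * ((k:ℂ) * ((2*Real.pi : ℝ) : ℂ)) = (k:ℂ) * (2 * (Real.pi:ℂ) * Complex.I) := by
      push_cast; ring
    rw [h1, Complex.exp_int_mul_two_pi_mul_I]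
    simp

noncomputable def E (ξ : ℤ) (x : ℝ) : ℂ := Complex.exp (Complex.I * x * ξ)

lemma contE (ξ : ℤ) : Continuous (E ξ) := by
  unfold E
  exact Complex.continuous_exp.comp (by continuity)

lemma prod_integral (ξ η : ℤ) :
    (∫ x in (0:ℝ)..(2*Real.pi), E ξ x * (starRingEnd ℂ) (E η x))
      = if ξ = η then (2*Real.pi : ℂ) else 0 := by
  have hpt : ∀ x : ℝ, E ξ x * (starRingEnd ℂ) (E η x)
      = Complex.exp (Complex.I * ((ξ - η : ℤ) : ℂ) * x) := by
    intro x
    unfold E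
    rw [← Complex.exp_conj, ← Complex.exp_add]
    congr 1
    simp [Complex.conj_I]
    push_cast
    ring
  simp only [hpt]
  rw [integral_exp_int (ξ - η)]
  simp [sub_eq_zero, eq_comm]

lemma double_expand (S : Finset ℤ) (c d : ℤ → ℂ) (x : ℝ) :
    (∑ ξ ∈ S, c ξ * E ξ x) * (starRingEnd ℂ) (∑ η ∈ S, d η * E η x)
      = ∑ ξ ∈ S, ∑ η ∈ S, (c ξ * (starRingEnd ℂ) (d η)) * (E ξ x * (starRingEnd ℂ) (E η x)) := by
  rw [map_sum, Finset.sum_mul_sum]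
  refine Finset.sum_congr rfl fun ξ _ => Finset.sum_congr rfl fun η _ => ?_
  rw [map_mul]; ring

lemma integrable_term (ξ η : ℤ) (a : ℂ) :
    IntervalIntegrable (fun x => a * (E ξ x * (starRingEnd ℂ) (E η x)))
      MeasureTheory.volume 0 (2*Real.pi) :=
  (continuous_const.mul ((contE ξ).mul (Complex.continuous_conj.comp (contE η)))).intervalIntegrable _ _

lemma parseval_finset (S : Finset ℤ) (c : ℤ → ℂ) :
    (∫ x in (0:ℝ)..(2*Real.pi), (Complex.normSq (∑ ξ ∈ S, c ξ * E ξ x) : ℝ))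
      = 2*Real.pi * ∑ ξ ∈ S, Complex.normSq (c ξ) := by
  have key : (∫ x in (0:ℝ)..(2*Real.pi),
      ((∑ ξ ∈ S, c ξ * E ξ x) * (starRingEnd ℂ) (∑ η ∈ S, c η * E η x)))
      = (2*Real.pi : ℂ) * ∑ ξ ∈ S, (Complex.normSq (c ξ) : ℂ) := by
    simp only [double_expand]
    rw [intervalIntegral.integral_finset_sum]
    · have inner : ∀ ξ ∈ S, (∫ x in (0:ℝ)..(2*Real.pi),
          ∑ η ∈ S, (c ξ * (starRingEnd ℂ) (c η)) * (E ξ x * (starRingEnd ℂ) (E η x)))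
          = (2*Real.pi : ℂ) * (Complex.normSq (c ξ) : ℂ) := by
        intro ξ hξ
        rw [intervalIntegral.integral_finset_sum (fun η _ => integrable_term ξ η _)]
        have : ∀ η ∈ S, (∫ x in (0:ℝ)..(2*Real.pi),
            (c ξ * (starRingEnd ℂ) (c η)) * (E ξ x * (starRingEnd ℂ) (E η x)))
            = (c ξ * (starRingEnd ℂ) (c η)) * (if ξ = η then (2*Real.pi:ℂ) else 0) := by
          intro η _
          rw [intervalIntegral.integral_const_mul, prod_integral]
        rw [Finset.sum_congr rfl this]
        simp only [mul_ite, mul_zero]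
        rw [Finset.sum_ite_eq S ξ]
        simp [hξ, Complex.mul_conj]
        ring
      rw [Finset.sum_congr rfl inner, ← Finset.mul_sum]
    · intro ξ _
      exact (continuous_finset_sum S fun η _ => continuous_const.mul
        ((contE ξ).mul (Complex.continuous_conj.comp (contE η)))).intervalIntegrable _ _
  have lhs : (∫ x in (0:ℝ)..(2*Real.pi), ((Complex.normSq (∑ ξ ∈ S, c ξ * E ξ x) : ℝ) : ℂ))
      = (∫ x in (0:ℝ)..(2*Real.pi),
      ((∑ ξ ∈ S, c ξ * E ξ x) * (starRingEnd ℂ) (∑ η ∈ S, c η * E η x))) := by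
    refine intervalIntegral.integral_congr fun x _ => ?_
    rw [Complex.mul_conj]
  rw [intervalIntegral.integral_ofReal] at lhs
  rw [key] at lhs
  exact_mod_cast lhs

lemma integral_mul_conjE (g : ℝ → ℂ) (η : ℤ) :
    (∫ x in (0:ℝ)..(2*Real.pi), g x * (starRingEnd ℂ) (E η x))
      = (2*Real.pi : ℂ) * fourierCoef g η := by
  have hpt : ∀ x : ℝ, g x * (starRingEnd ℂ) (E η x)
      = g x * Complex.exp (-(Complex.I * (η:ℂ) * (x:ℂ))) := by
    intro x
    unfold E
    rw [← Complex.exp_conj]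
    congr 2
    simp [Complex.conj_I]
    ring
  rw [intervalIntegral.integral_congr (fun x _ => hpt x)]
  unfold fourierCoef
  have h2π : ((2*Real.pi : ℝ) : ℂ) ≠ 0 := by
    exact_mod_cast (by positivity : (2*Real.pi : ℝ) ≠ 0)
  push_cast at h2π ⊢
  rw [← mul_assoc, mul_one_div, div_self h2π, one_mul]

lemma bessel (g : ℝ → ℂ) (hg : Continuous g) (S : Finset ℤ) :
    2*Real.pi * ∑ ξ ∈ S, Complex.normSq (fourierCoef g ξ)
      ≤ ∫ x in (0:ℝ)..(2*Real.pi), Complex.normSq (g x) := by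
  set c : ℤ → ℂ := fun ξ => fourierCoef g ξ with hc
  set h : ℝ → ℂ := fun x => ∑ ξ ∈ S, c ξ * E ξ x with hh
  have hhcont : Continuous h := continuous_finset_sum S fun ξ _ => continuous_const.mul (contE ξ)
  -- I2 = ∫ g * conj h
  have hI2 : (∫ x in (0:ℝ)..(2*Real.pi), g x * (starRingEnd ℂ) (h x))
      = (2*Real.pi : ℂ) * ∑ ξ ∈ S, (Complex.normSq (c ξ) : ℂ) := by
    have hpt : ∀ x : ℝ, g x * (starRingEnd ℂ) (h x)
        = ∑ η ∈ S, (starRingEnd ℂ) (c η) * (g x * (starRingEnd ℂ) (E η x)) := by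
      intro x
      rw [hh]
      simp only [map_sum, map_mul, Finset.mul_sum]
      exact Finset.sum_congr rfl fun η _ => by ring
    rw [intervalIntegral.integral_congr (fun x _ => hpt x)]
    rw [intervalIntegral.integral_finset_sum
      (f := fun η x => (starRingEnd ℂ) (c η) * (g x * (starRingEnd ℂ) (E η x)))
      (fun η _ =>
      (continuous_const.mul (hg.mul (Complex.continuous_conj.comp (contE η)))).intervalIntegrable _ _)]
    have : ∀ η ∈ S, (∫ x in (0:ℝ)..(2*Real.pi),
        (starRingEnd ℂ) (c η) * (g x * (starRingEnd ℂ) (E η x)))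
        = ((2*Real.pi : ℝ) : ℂ) * (Complex.normSq (c η) : ℂ) := by
      intro η _
      rw [intervalIntegral.integral_const_mul, integral_mul_conjE]
      push_cast
      rw [← Complex.mul_conj (c η)]
      ring
    rw [Finset.sum_congr rfl this, ← Finset.mul_sum]
    push_cast
    ring
  -- real expansion
  have expand : (∫ x in (0:ℝ)..(2*Real.pi), Complex.normSq (g x - h x))
      = (∫ x in (0:ℝ)..(2*Real.pi), Complex.normSq (g x))
        - 2*Real.pi * ∑ ξ ∈ S, Complex.normSq (c ξ) := by
    have hpt : ∀ x : ℝ, Complex.normSq (g x - h x)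
        = Complex.normSq (g x) + Complex.normSq (h x)
          - 2 * (Complex.reCLM (g x * (starRingEnd ℂ) (h x))) := fun x => Complex.normSq_sub _ _
    rw [intervalIntegral.integral_congr (fun x _ => hpt x)]
    have i1 : IntervalIntegrable (fun x => Complex.normSq (g x)) MeasureTheory.volume 0 (2*Real.pi) :=
      (Complex.continuous_normSq.comp hg).intervalIntegrable _ _
    have i2 : IntervalIntegrable (fun x => Complex.normSq (h x)) MeasureTheory.volume 0 (2*Real.pi) :=
      (Complex.continuous_normSq.comp hhcont).intervalIntegrable _ _
    have icplx : IntervalIntegrable (fun x => g x * (starRingEnd ℂ) (h x)) MeasureTheory.volume 0 (2*Real.pi) :=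
      (hg.mul (Complex.continuous_conj.comp hhcont)).intervalIntegrable _ _
    have i3 : IntervalIntegrable (fun x => 2 * (Complex.reCLM (g x * (starRingEnd ℂ) (h x)))) MeasureTheory.volume 0 (2*Real.pi) :=
      (continuous_const.mul (Complex.continuous_re.comp (hg.mul (Complex.continuous_conj.comp hhcont)))).intervalIntegrable _ _
    rw [intervalIntegral.integral_sub (i1.add i2) i3, intervalIntegral.integral_add i1 i2,
        intervalIntegral.integral_const_mul,
        Complex.reCLM.intervalIntegral_comp_comm icplx, hI2]
    have hp : (∫ x in (0:ℝ)..(2*Real.pi), Complex.normSq (h x))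
        = 2*Real.pi * ∑ ξ ∈ S, Complex.normSq (c ξ) := parseval_finset S c
    rw [hp]
    push_cast
    simp [Complex.reCLM]
    ring
  have nn : 0 ≤ (∫ x in (0:ℝ)..(2*Real.pi), Complex.normSq (g x - h x)) := by
    apply intervalIntegral.integral_nonneg (by positivity)
    intro x _
    exact Complex.normSq_nonneg _
  linarith [expand ▸ nn]

lemma fourierCoef_sub (f g : ℝ → ℂ) (hf : Continuous f) (hg : Continuous g) (ξ : ℤ) :
    fourierCoef (fun x => f x - g x) ξ = fourierCoef f ξ - fourierCoef g ξ := by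
  unfold fourierCoef
  rw [← mul_sub, ← intervalIntegral.integral_sub
    (show IntervalIntegrable (fun x => f x * Complex.exp (-(Complex.I * (ξ:ℂ) * (x:ℂ)))) MeasureTheory.volume 0 (2 * Real.pi) from (hf.mul (by continuity)).intervalIntegrable _ _)
    (show IntervalIntegrable (fun x => g x * Complex.exp (-(Complex.I * (ξ:ℂ) * (x:ℂ)))) MeasureTheory.volume 0 (2 * Real.pi) from (hg.mul (by continuity)).intervalIntegrable _ _)]
  congr 1
  refine intervalIntegral.integral_congr fun x _ => ?_
  ring

lemma fourierCoef_translate (f : ℝ → ℂ) (hf : Continuous f)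
    (hper : ∀ x, f (x + 2*Real.pi) = f x) (h : ℝ) (ξ : ℤ) :
    fourierCoef (fun x => f (x - h)) ξ
      = Complex.exp (-(Complex.I * ξ * h)) * fourierCoef f ξ := by
  unfold fourierCoef
  have key : (∫ x in (0:ℝ)..(2*Real.pi), f (x - h) * Complex.exp (-(Complex.I * ξ * x)))
      = Complex.exp (-(Complex.I * ξ * h)) *
        ∫ x in (0:ℝ)..(2*Real.pi), f x * Complex.exp (-(Complex.I * ξ * x)) := by
    set F : ℝ → ℂ := fun u => f u * Complex.exp (-(Complex.I * ξ * u)) with hF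
    have hFper : Function.Periodic F (2*Real.pi) := by
      intro u
      simp only [hF]
      rw [hper]
      congr 1
      rw [show (-(Complex.I * ξ * ((u + 2*Real.pi : ℝ) : ℂ)) : ℂ)
          = -(Complex.I * ξ * u) + (-ξ : ℤ) * (2*Real.pi*Complex.I) by push_cast; ring,
        Complex.exp_add, Complex.exp_int_mul_two_pi_mul_I]
      simp
    have hpt : ∀ x : ℝ, f (x - h) * Complex.exp (-(Complex.I * ξ * x))
        = Complex.exp (-(Complex.I * ξ * h)) * F (x - h) := by
      intro x
      simp only [hF]
      rw [show (-(Complex.I * ξ * (x:ℂ))) = (-(Complex.I * ξ * (h:ℂ)))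
          + (-(Complex.I * ξ * ((x - h : ℝ):ℂ))) by push_cast; ring,
        Complex.exp_add]
      ring
    rw [intervalIntegral.integral_congr (fun x _ => hpt x),
        intervalIntegral.integral_const_mul]
    congr 1
    rw [intervalIntegral.integral_comp_sub_right F h]
    have := hFper.intervalIntegral_add_eq (-h) 0
    rw [show (2*Real.pi - h) = -h + 2*Real.pi by ring]
    simpa using this
  rw [key]
  ring

lemma normSq_exp_sub_one (θ : ℝ) :
    Complex.normSq (Complex.exp (-(Complex.I * θ)) - 1) = 2 - 2*Real.cos θ := by
  rw [show (-(Complex.I * θ) : ℂ) = ((-θ : ℝ) : ℂ) * Complex.I by push_cast; ring,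
    Complex.exp_mul_I, ← Complex.ofReal_cos, ← Complex.ofReal_sin]
  rw [show (((Real.cos (-θ) : ℝ) : ℂ) + ((Real.sin (-θ) : ℝ) : ℂ) * Complex.I - 1)
      = (((Real.cos (-θ) - 1 : ℝ) : ℂ) + ((Real.sin (-θ) : ℝ) : ℂ) * Complex.I) by
    push_cast; ring]
  rw [Complex.normSq_add_mul_I, Real.cos_neg, Real.sin_neg]
  have := Real.sin_sq_add_cos_sq θ
  ring_nf
  nlinarith [Real.sin_sq_add_cos_sq θ]

lemma block_l2 (f : ℝ → ℂ) (hf : Continuous f) (hper : ∀ x, f (x + 2*Real.pi) = f x)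
    (s B : ℝ) (hs0 : 0 < s) (hB0 : 0 ≤ B)
    (hB : ∀ x y : ℝ, ‖f (x - y) - f x‖ ≤ B * |y| ^ s) (m : ℕ) :
    ∑ ξ ∈ dyadicBlock m, Complex.normSq (fourierCoef f ξ)
      ≤ (B * (Real.pi / 2^(m+1)) ^ s)^2 := by
  set h : ℝ := Real.pi / 2^(m+1) with hh
  have hhpos : 0 < h := by positivity
  set g : ℝ → ℂ := fun x => f (x - h) - f x with hg
  have hgc : Continuous g := (hf.comp (continuous_sub_right h)).sub hf
  have hgb : ∀ x, Complex.normSq (g x) ≤ (B * h ^ s)^2 := by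
    intro x
    have h1 := hB x h
    rw [abs_of_pos hhpos] at h1
    rw [← Complex.sq_norm]
    have h0 : (0:ℝ) ≤ ‖g x‖ := norm_nonneg _
    nlinarith
  have hint : (∫ x in (0:ℝ)..(2*Real.pi), Complex.normSq (g x))
      ≤ 2*Real.pi * (B * h ^ s)^2 := by
    have := intervalIntegral.integral_mono_on (by positivity : (0:ℝ) ≤ 2*Real.pi)
      ((Complex.continuous_normSq.comp hgc).intervalIntegrable _ _)
      (_root_.intervalIntegrable_const (μ := MeasureTheory.volume) (c := (B * h ^ s)^2))
      (fun x _ => hgb x)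
    simpa [mul_comm] using this
  have hbes := bessel g hgc (dyadicBlock m)
  -- per-ξ comparison
  have hcoef : ∀ ξ ∈ dyadicBlock m,
      Complex.normSq (fourierCoef f ξ) ≤ Complex.normSq (fourierCoef g ξ) := by
    intro ξ hξ
    obtain ⟨hIcc, h1, h2⟩ := Finset.mem_filter.mp hξ
    have htrans : fourierCoef g ξ
        = (Complex.exp (-(Complex.I * ξ * h)) - 1) * fourierCoef f ξ := by
      rw [hg]
      rw [fourierCoef_sub (fun x => f (x - h)) f (hf.comp (continuous_sub_right h)) hf,
        fourierCoef_translate f hf hper h ξ]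
      ring
    rw [htrans, Complex.normSq_mul]
    have hns : Complex.normSq (Complex.exp (-(Complex.I * ξ * h)) - 1) = 2 - 2*Real.cos (ξ*h) := by
      rw [show (-(Complex.I * ξ * h) : ℂ) = -(Complex.I * ((ξ*h : ℝ):ℂ)) by push_cast; ring]
      exact normSq_exp_sub_one (ξ*h)
    have hcos : Real.cos ((ξ:ℝ)*h) ≤ 0 := by
      rw [← Real.cos_abs, abs_mul, abs_of_pos hhpos]
      apply Real.cos_nonpos_of_pi_div_two_le_of_le
      · have : (2:ℝ)^m ≤ |(ξ:ℝ)| := by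
          rw [← Int.cast_abs]
          exact_mod_cast h1
        calc Real.pi/2 = 2^m * (Real.pi / 2^(m+1)) := by
              rw [pow_succ]; field_simp
          _ ≤ |(ξ:ℝ)| * h := by
              rw [hh]
              exact mul_le_mul_of_nonneg_right this (le_of_lt (by positivity))
      · have : |(ξ:ℝ)| ≤ 2^(m+1) := by
          rw [← Int.cast_abs]
          exact_mod_cast le_of_lt h2
        calc |(ξ:ℝ)| * h ≤ 2^(m+1) * (Real.pi / 2^(m+1)) :=
              mul_le_mul_of_nonneg_right this (le_of_lt hhpos)
          _ = Real.pi := by field_simp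
          _ ≤ Real.pi + Real.pi/2 := by nlinarith [Real.pi_pos]
    nlinarith [Complex.normSq_nonneg (fourierCoef f ξ), hns, hcos]
  calc ∑ ξ ∈ dyadicBlock m, Complex.normSq (fourierCoef f ξ)
      ≤ ∑ ξ ∈ dyadicBlock m, Complex.normSq (fourierCoef g ξ) := Finset.sum_le_sum hcoef
    _ ≤ (B * h ^ s)^2 := by
        have hπ : 0 < 2*Real.pi := by positivity
        nlinarith [hbes, hint]

noncomputable def e2 (x : ℝ) : ℝ := (2:ℝ) ^ x

lemma e2_pos (x : ℝ) : 0 < e2 x := Real.rpow_pos_of_pos two_pos x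
lemma e2_nonneg (x : ℝ) : 0 ≤ e2 x := (e2_pos x).le
lemma e2_add (x y : ℝ) : e2 (x + y) = e2 x * e2 y := Real.rpow_add two_pos x y
lemma e2_mono {x y : ℝ} (h : x ≤ y) : e2 x ≤ e2 y :=
  Real.rpow_le_rpow_of_exponent_le one_le_two h
lemma e2_rpow (x y : ℝ) : (e2 x) ^ y = e2 (x * y) := (Real.rpow_mul (by norm_num) x y).symm
lemma e2_npow (x : ℝ) (n : ℕ) : (e2 x) ^ n = e2 (x * n) := by
  rw [← Real.rpow_natCast (e2 x) n, e2_rpow]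
lemma e2_nat (n : ℕ) : ((2:ℝ) ^ n : ℝ) = e2 n := by
  rw [← Real.rpow_natCast 2 n]; rfl
lemma e2_one_le {x : ℝ} (h : 0 ≤ x) : 1 ≤ e2 x := by
  have := e2_mono h
  simpa [e2] using this

lemma absE (ξ : ℤ) (x : ℝ) : ‖E ξ x‖ = 1 := by
  unfold E
  rw [show (Complex.I * x * ξ : ℂ) = ((x * ξ : ℝ) : ℂ) * Complex.I by push_cast; ring]
  exact Complex.norm_exp_ofReal_mul_I _

lemma card_dyadicBlock (m : ℕ) : ((dyadicBlock m).card : ℝ) ≤ e2 ((m:ℝ) + 3) := by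
  have h1 : (dyadicBlock m).card ≤ (Finset.Icc (-(2^(m+1) : ℤ)) (2^(m+1))).card :=
    Finset.card_le_card (Finset.filter_subset _ _)
  rw [Int.card_Icc] at h1
  have h2 : ((2:ℤ)^(m+1) + 1 - -(2^(m+1))).toNat ≤ 2^(m+3) := by
    rw [Int.toNat_le]
    push_cast
    have : (1:ℤ) ≤ 2^(m+1) := one_le_pow₀ (by norm_num)
    have h3 : (2:ℤ)^(m+3) = 4 * 2^(m+1) := by ring
    linarith [h3]
  have : (dyadicBlock m).card ≤ 2^(m+3) := le_trans h1 h2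
  calc ((dyadicBlock m).card : ℝ) ≤ ((2^(m+3) : ℕ) : ℝ) := by exact_mod_cast this
    _ = e2 ((m:ℝ)+3) := by
        rw [show ((m:ℝ)+3) = ((m+3:ℕ):ℝ) by push_cast; ring, ← e2_nat]
        push_cast
        ring

lemma block_lp (p s ρ C : ℝ) (hp0 : 2 ≤ p) (hs0 : 0 < s) (σ : ℤ → ℂ)
    (hσ : ∀ ξ : ℤ, ξ ≠ 0 → ‖σ ξ‖ ≤ C * |(ξ:ℝ)| ^ (-ρ))
    (hC : 0 ≤ C)
    (f : ℝ → ℂ) (hf : Continuous f) (hper : ∀ x, f (x + 2*Real.pi) = f x)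
    (B : ℝ) (hB0 : 0 ≤ B)
    (hB : ∀ x y : ℝ, ‖f (x - y) - f x‖ ≤ B * |y| ^ s) (m : ℕ) :
    (∫ x in (0:ℝ)..(2*Real.pi),
        ‖∑ ξ ∈ dyadicBlock m, σ ξ * fourierCoef f ξ * E ξ x‖ ^ p) ^ (1/p)
      ≤ e2 (3/2) * (2*Real.pi)^(1/p) * (C * e2 |ρ| * Real.pi^s * B)
          * e2 ((1/2 - 1/p - ρ - s) * m) := by
  have hppos : 0 < p := by linarith
  set c : ℤ → ℂ := fun ξ => σ ξ * fourierCoef f ξ with hcdef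
  set G : ℝ → ℂ := fun x => ∑ ξ ∈ dyadicBlock m, c ξ * E ξ x with hGdef
  have hGc : Continuous G := continuous_finset_sum _ fun ξ _ => continuous_const.mul (contE ξ)
  set N : ℝ := C * e2 |ρ| * Real.pi ^ s * B with hNdef
  have hN0 : 0 ≤ N := by
    have := Real.rpow_nonneg Real.pi_pos.le s
    have := e2_nonneg |ρ|
    positivity
  -- σ bound on block
  have hσm : ∀ ξ ∈ dyadicBlock m, ‖σ ξ‖ ≤ C * e2 |ρ| * e2 (-ρ * m) := by
    intro ξ hξ
    obtain ⟨hIcc, h1, h2⟩ := Finset.mem_filter.mp hξ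
    have h1R : e2 m ≤ |(ξ:ℝ)| := by
      have h1' : ((2:ℝ))^(m:ℕ) ≤ |(ξ:ℝ)| := by exact_mod_cast h1
      rwa [e2_nat] at h1'
    have h2R : |(ξ:ℝ)| ≤ e2 ((m:ℝ)+1) := by
      have h2' : |(ξ:ℝ)| ≤ ((2:ℝ))^(m+1:ℕ) := by exact_mod_cast h2.le
      rwa [e2_nat, Nat.cast_add, Nat.cast_one] at h2'
    have hξ0 : ξ ≠ 0 := by
      intro h0
      rw [h0] at h1
      simp only [abs_zero] at h1
      exact absurd h1 (not_le.mpr (pow_pos (by norm_num) m))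
    have habs : |(ξ:ℝ)| ^ (-ρ) ≤ e2 |ρ| * e2 (-ρ * m) := by
      rcases le_or_gt 0 ρ with hρ0 | hρ0
      · calc |(ξ:ℝ)|^(-ρ) ≤ (e2 m)^(-ρ) :=
              Real.rpow_le_rpow_of_nonpos (e2_pos m) h1R (neg_nonpos.mpr hρ0)
          _ = e2 (-ρ*m) := by rw [e2_rpow]; ring_nf
          _ ≤ e2 |ρ| * e2 (-ρ*m) :=
              le_mul_of_one_le_left (e2_nonneg _) (e2_one_le (abs_nonneg ρ))
      · calc |(ξ:ℝ)|^(-ρ) ≤ (e2 ((m:ℝ)+1))^(-ρ) :=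
              Real.rpow_le_rpow (abs_nonneg _) h2R (by linarith)
          _ = e2 (-ρ) * e2 (-ρ*m) := by
              rw [e2_rpow, show ((m:ℝ)+1)*(-ρ) = -ρ + -ρ*m by ring, e2_add]
          _ ≤ e2 |ρ| * e2 (-ρ*m) :=
              mul_le_mul_of_nonneg_right (e2_mono (neg_le_abs ρ)) (e2_nonneg _)
    calc ‖σ ξ‖ ≤ C * |(ξ:ℝ)|^(-ρ) := hσ ξ hξ0
      _ ≤ C * (e2 |ρ| * e2 (-ρ*m)) := mul_le_mul_of_nonneg_left habs hC
      _ = C * e2 |ρ| * e2 (-ρ*m) := by ring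
  -- block ℓ² bound
  have hT := block_l2 f hf hper s B hs0 hB0 hB m
  have hβ : B * (Real.pi / 2^(m+1)) ^ s ≤ B * Real.pi ^ s * e2 (-s * m) := by
    have hdiv : (Real.pi / 2^(m+1) : ℝ) ^ s = Real.pi^s * e2 (-((m:ℝ)+1)*s) := by
      rw [Real.div_rpow Real.pi_pos.le (by positivity), e2_nat (m+1)]
      rw [show ((m+1 : ℕ) : ℝ) = ((m:ℝ)+1) by push_cast; ring]
      rw [e2_rpow]
      rw [show Real.pi ^ s / e2 (((m:ℝ)+1) * s) = Real.pi ^ s * (e2 (((m:ℝ)+1)*s))⁻¹ from div_eq_mul_inv _ _]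
      congr 1
      rw [show (-((m:ℝ)+1)*s) = -(((m:ℝ)+1)*s) by ring]
      rw [e2, e2, Real.rpow_neg (by norm_num)]
    rw [hdiv, ← mul_assoc]
    apply mul_le_mul_of_nonneg_left _ (by positivity)
    apply e2_mono
    nlinarith
  -- S2 bound
  set S2 : ℝ := ∑ ξ ∈ dyadicBlock m, Complex.normSq (c ξ) with hS2def
  have hS2nn : 0 ≤ S2 := Finset.sum_nonneg fun _ _ => Complex.normSq_nonneg _
  have hQ : S2 ≤ (N * e2 (-(ρ+s)*m))^2 := by
    have hterm : ∀ ξ ∈ dyadicBlock m, Complex.normSq (c ξ)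
        ≤ (C * e2 |ρ| * e2 (-ρ*m))^2 * Complex.normSq (fourierCoef f ξ) := by
      intro ξ hξ
      have : c ξ = σ ξ * fourierCoef f ξ := rfl
      rw [this, Complex.normSq_mul]
      apply mul_le_mul_of_nonneg_right _ (Complex.normSq_nonneg _)
      rw [← Complex.sq_norm]
      exact pow_le_pow_left₀ (norm_nonneg _) (hσm ξ hξ) 2
    calc S2 ≤ ∑ ξ ∈ dyadicBlock m,
          (C * e2 |ρ| * e2 (-ρ*m))^2 * Complex.normSq (fourierCoef f ξ) :=
          Finset.sum_le_sum hterm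
      _ = (C * e2 |ρ| * e2 (-ρ*m))^2
            * ∑ ξ ∈ dyadicBlock m, Complex.normSq (fourierCoef f ξ) :=
          (Finset.mul_sum _ _ _).symm
      _ ≤ (C * e2 |ρ| * e2 (-ρ*m))^2 * (B * (Real.pi/2^(m+1))^s)^2 :=
          mul_le_mul_of_nonneg_left hT (by positivity)
      _ ≤ (C * e2 |ρ| * e2 (-ρ*m))^2 * (B * Real.pi^s * e2 (-s*m))^2 := by
          apply mul_le_mul_of_nonneg_left _ (by positivity)
          apply pow_le_pow_left₀ (by positivity) hβ 2
      _ = (N * e2 (-(ρ+s)*m))^2 := by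
          rw [hNdef, show (-(ρ+s))*(m:ℝ) = -ρ*m + -s*m by ring, e2_add]
          ring
  -- sup bound
  set M : ℝ := ∑ ξ ∈ dyadicBlock m, ‖c ξ‖ with hMdef
  have hMnn : 0 ≤ M := Finset.sum_nonneg fun _ _ => norm_nonneg _
  have hGsup : ∀ x, ‖G x‖ ≤ M := by
    intro x
    calc ‖G x‖ ≤ ∑ ξ ∈ dyadicBlock m, ‖c ξ * E ξ x‖ :=
          norm_sum_le _ _
      _ = M := by
          rw [hMdef]
          refine Finset.sum_congr rfl fun ξ _ => ?_
          rw [norm_mul, absE, mul_one]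
  set P : ℝ := e2 (((m:ℝ)+3)/2 + (-(ρ+s))*m) * N with hPdef
  have hP0 : 0 ≤ P := mul_nonneg (e2_nonneg _) hN0
  have hMP : M ≤ P := by
    have hsq : M^2 ≤ P^2 := by
      calc M^2 ≤ (dyadicBlock m).card * S2 := by
            rw [hMdef, hS2def]
            have := sq_sum_le_card_mul_sum_sq (s := dyadicBlock m)
              (f := fun ξ => ‖c ξ‖)
            simpa [Complex.sq_norm] using this
        _ ≤ e2 ((m:ℝ)+3) * (N * e2 (-(ρ+s)*m))^2 :=
            mul_le_mul (card_dyadicBlock m) hQ hS2nn (e2_nonneg _)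
        _ = P^2 := by
            have h1 : (e2 ((((m:ℝ)+3)/2 + (-(ρ+s))*m)))^(2:ℕ)
                = e2 ((m:ℝ)+3) * (e2 (-(ρ+s)*(m:ℝ)))^(2:ℕ) := by
              rw [e2_npow, e2_npow, ← e2_add]
              congr 1
              push_cast
              ring
            calc e2 ((m:ℝ)+3) * (N * e2 (-(ρ+s)*m))^2
                = e2 ((m:ℝ)+3) * (e2 (-(ρ+s)*(m:ℝ)))^2 * N^2 := by ring
              _ = (e2 ((((m:ℝ)+3)/2 + (-(ρ+s))*m)))^2 * N^2 := by rw [h1]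
              _ = P^2 := by rw [hPdef]; ring
    nlinarith [hsq, hP0, hMnn]
  show (∫ x in (0:ℝ)..(2*Real.pi), ‖G x‖ ^ p) ^ (1/p)
      ≤ e2 (3/2) * (2*Real.pi)^(1/p) * N * e2 ((1/2 - 1/p - ρ - s) * m)
  have hXnn : 0 ≤ ∫ x in (0:ℝ)..(2*Real.pi), ‖G x‖ ^ p :=
    intervalIntegral.integral_nonneg (by positivity)
      (fun x _ => Real.rpow_nonneg (norm_nonneg _) p)
  have hint : (∫ x in (0:ℝ)..(2*Real.pi), ‖G x‖ ^ p)
      ≤ P ^ (p-2) * (2*Real.pi * S2) := by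
    have hpt : ∀ x ∈ Set.Icc (0:ℝ) (2*Real.pi),
        ‖G x‖ ^ p ≤ P ^ (p-2) * Complex.normSq (G x) := by
      intro x _
      rcases eq_or_lt_of_le (norm_nonneg (G x)) with h0 | h0
      · rw [← h0, Real.zero_rpow (by linarith : p ≠ 0)]
        exact mul_nonneg (Real.rpow_nonneg hP0 _) (Complex.normSq_nonneg _)
      · have heq : ‖G x‖ ^ p
            = ‖G x‖ ^ (p-2) * Complex.normSq (G x) := by
          rw [← Complex.sq_norm, ← Real.rpow_natCast (‖G x‖) 2,
            ← Real.rpow_add h0]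
          norm_num
        rw [heq]
        exact mul_le_mul_of_nonneg_right
          (Real.rpow_le_rpow (norm_nonneg _) (le_trans (hGsup x) hMP) (by linarith))
          (Complex.normSq_nonneg _)
    have hi1 : IntervalIntegrable (fun x => ‖G x‖ ^ p)
        MeasureTheory.volume 0 (2*Real.pi) :=
      (Continuous.rpow_const (continuous_norm.comp hGc)
        (fun x => Or.inr (by linarith))).intervalIntegrable _ _
    have hi2 : IntervalIntegrable (fun x => P^(p-2) * Complex.normSq (G x))
        MeasureTheory.volume 0 (2*Real.pi) :=
      (continuous_const.mul (Complex.continuous_normSq.comp hGc)).intervalIntegrable _ _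
    have hpars : (∫ x in (0:ℝ)..(2*Real.pi), Complex.normSq (G x)) = 2*Real.pi * S2 := by
      rw [hS2def]
      simp only [hGdef]
      exact parseval_finset (dyadicBlock m) c
    calc (∫ x in (0:ℝ)..(2*Real.pi), ‖G x‖ ^ p)
        ≤ ∫ x in (0:ℝ)..(2*Real.pi), P^(p-2) * Complex.normSq (G x) :=
          intervalIntegral.integral_mono_on (by positivity) hi1 hi2 hpt
      _ = P^(p-2) * ∫ x in (0:ℝ)..(2*Real.pi), Complex.normSq (G x) :=
          intervalIntegral.integral_const_mul _ _
      _ = P^(p-2) * (2*Real.pi * S2) := by rw [hpars]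
  set u : ℝ := ((m:ℝ)+3)/2 + (-(ρ+s))*m with hudef
  set w : ℝ := -(ρ+s)*(m:ℝ) with hwdef
  have hbound2 : P ^ (p-2) * (2*Real.pi * S2)
      ≤ 2*Real.pi * e2 (u*(p-2) + w*2) * N ^ p := by
    have hPp : P ^ (p-2) = e2 (u*(p-2)) * N ^ (p-2) := by
      rw [hPdef, Real.mul_rpow (e2_nonneg _) hN0, e2_rpow]
    have hN2 : N ^ (2:ℝ) = N^(2:ℕ) := by
      rw [← Real.rpow_natCast N 2]
      norm_num
    have hS2' : S2 ≤ e2 (w*2) * N ^ (2:ℝ) := by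
      calc S2 ≤ (N * e2 w)^2 := hQ
        _ = e2 (w*2) * N ^ (2:ℝ) := by
            rw [hN2, mul_pow, e2_npow]
            push_cast
            ring
    calc P ^ (p-2) * (2*Real.pi * S2)
        = 2*Real.pi * (e2 (u*(p-2)) * N ^ (p-2)) * S2 := by rw [hPp]; ring
      _ ≤ 2*Real.pi * (e2 (u*(p-2)) * N ^ (p-2)) * (e2 (w*2) * N ^ (2:ℝ)) := by
          exact mul_le_mul_of_nonneg_left hS2'
            (mul_nonneg (by positivity) (mul_nonneg (e2_nonneg _) (Real.rpow_nonneg hN0 _)))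
      _ = 2*Real.pi * e2 (u*(p-2) + w*2) * (N ^ (p-2) * N ^ (2:ℝ)) := by
          rw [e2_add]; ring
      _ = 2*Real.pi * e2 (u*(p-2) + w*2) * N ^ p := by
          rw [← Real.rpow_add' hN0 (by linarith : p - 2 + 2 ≠ 0)]
          norm_num
  have hXfin : (∫ x in (0:ℝ)..(2*Real.pi), ‖G x‖ ^ p) ^ (1/p)
      ≤ (2*Real.pi)^(1/p) * e2 ((u*(p-2)+w*2)/p) * N := by
    have h1 := Real.rpow_le_rpow hXnn (le_trans hint hbound2) (by positivity : (0:ℝ) ≤ 1/p)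
    have hsplit : (2*Real.pi * e2 (u*(p-2) + w*2) * N ^ p) ^ (1/p)
        = (2*Real.pi)^(1/p) * e2 ((u*(p-2)+w*2)/p) * N := by
      rw [Real.mul_rpow (mul_nonneg (by positivity) (e2_nonneg _)) (Real.rpow_nonneg hN0 p),
        Real.mul_rpow (by positivity) (e2_nonneg _), e2_rpow,
        ← Real.rpow_mul hN0, mul_one_div_cancel (ne_of_gt hppos), Real.rpow_one,
        mul_one_div]
    rw [hsplit] at h1
    exact h1
  have hexp : (u*(p-2)+w*2)/p ≤ 3/2 + (1/2 - 1/p - ρ - s)*m := by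
    rw [div_le_iff₀ hppos, hudef, hwdef]
    have hp' : p ≠ 0 := ne_of_gt hppos
    have key : (3/2 + (1/2 - 1/p - ρ - s)*(m:ℝ))*p
        = (((m:ℝ)+3)/2 + (-(ρ+s))*(m:ℝ))*(p-2) + (-(ρ+s)*(m:ℝ))*2 + 3
          + (1 - (1/p)*p)*(m:ℝ) := by ring
    rw [key, mul_comm (1/p) p, mul_one_div_cancel hp']
    have hm : (0:ℝ) ≤ m := Nat.cast_nonneg m
    nlinarith
  calc (∫ x in (0:ℝ)..(2*Real.pi), ‖G x‖ ^ p) ^ (1/p)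
      ≤ (2*Real.pi)^(1/p) * e2 ((u*(p-2)+w*2)/p) * N := hXfin
    _ ≤ (2*Real.pi)^(1/p) * (e2 (3/2) * e2 ((1/2 - 1/p - ρ - s)*m)) * N := by
        apply mul_le_mul_of_nonneg_right _ hN0
        apply mul_le_mul_of_nonneg_left _ (by positivity)
        rw [← e2_add]
        exact e2_mono hexp
    _ = e2 (3/2) * (2*Real.pi)^(1/p) * N * e2 ((1/2 - 1/p - ρ - s) * m) := by ring

end HLaux

theorem hardy_littlewood_multiplier (p q s r ρ C : ℝ)
    (hp0 : 2 ≤ p) (hq0 : 0 < q) (hs0 : 0 < s) (hs1 : s < 1)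
    (hρ : r + 1 - 2/p < ρ) (hρ1 : ρ ≤ 1)
    (σ : ℤ → ℂ) (hσ : ∀ ξ : ℤ, ξ ≠ 0 → ‖(σ ξ)‖ ≤ C * |(ξ:ℝ)| ^ (-ρ))
    (hσ0 : ‖(σ 0)‖ ≤ C) :
    ∃ C' : ℝ, ∀ f : ℝ → ℂ, Continuous f → (∀ x, f (x + 2 * Real.pi) = f x) →
      ∀ A B : ℝ, (∀ x, ‖(f x)‖ ≤ A) →
      (∀ x y : ℝ, ‖(f (x - y) - f x)‖ ≤ B * |y| ^ s) →
      Summable (fun ξ : ℤ => ‖(fourierCoef f ξ)‖ ^ p) →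
      (∑' m : ℕ, (2:ℝ) ^ ((m:ℝ) * r * q) *
          ((∫ x in (0:ℝ)..(2 * Real.pi),
              ‖(∑ ξ ∈ dyadicBlock m,
                σ ξ * fourierCoef f ξ * Complex.exp (Complex.I * (x:ℂ) * (ξ:ℂ)))‖ ^ p) ^ (1/p)) ^ q
        ) ^ (1/q)
      ≤ C' * (A + B) := by

  have hppos : 0 < p := by linarith
  have hC : 0 ≤ C := le_trans (norm_nonneg _) hσ0
  set δ₀ : ℝ := 1/2 - 1/p - ρ - s with hδ₀
  have hδ : r + δ₀ < 0 := by
    have h2p : 2/p = 2*(1/p) := by ring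
    have h1p : 1/p ≤ 1/2 := by
      rw [div_le_div_iff₀ hppos (by norm_num)]
      linarith
    rw [hδ₀]
    linarith
  set t : ℝ := e2 ((r+δ₀)*q) with htdef
  have ht0 : 0 < t := e2_pos _
  have ht1 : t < 1 := by
    rw [htdef]
    exact Real.rpow_lt_one_of_one_lt_of_neg one_lt_two (by nlinarith)
  have h1t : 0 < 1 - t := by linarith
  set K : ℝ := e2 (3/2) * (2*Real.pi)^(1/p) * (C * e2 |ρ| * Real.pi^s) with hKdef
  have hK0 : 0 ≤ K := by
    have h1 := Real.rpow_nonneg (by positivity : (0:ℝ) ≤ 2*Real.pi) (1/p)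
    have h2 := Real.rpow_nonneg Real.pi_pos.le s
    have h3 := e2_nonneg (3/2)
    have h4 := e2_nonneg |ρ|
    positivity
  refine ⟨K * ((1-t)⁻¹)^(1/q), ?_⟩
  intro f hf hper A B hA hB _hsum
  have hA0 : 0 ≤ A := le_trans (norm_nonneg _) (hA 0)
  have hB0 : 0 ≤ B := by
    have h1 := hB 1 1
    have h2 := norm_nonneg (f (1-1) - f 1)
    rw [abs_one, Real.one_rpow, mul_one] at h1
    linarith
  have hKB0 : 0 ≤ K * B := mul_nonneg hK0 hB0
  have hXnn : ∀ m : ℕ, 0 ≤ (∫ x in (0:ℝ)..(2 * Real.pi),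
      ‖∑ ξ ∈ dyadicBlock m,
        σ ξ * fourierCoef f ξ * Complex.exp (Complex.I * (x:ℂ) * (ξ:ℂ))‖ ^ p) :=
    fun m => intervalIntegral.integral_nonneg (by positivity)
      (fun x _ => Real.rpow_nonneg (norm_nonneg _) p)
  have key : ∀ m : ℕ, (2:ℝ) ^ ((m:ℝ) * r * q) *
      ((∫ x in (0:ℝ)..(2 * Real.pi),
          ‖∑ ξ ∈ dyadicBlock m,
            σ ξ * fourierCoef f ξ * Complex.exp (Complex.I * (x:ℂ) * (ξ:ℂ))‖ ^ p) ^ (1/p)) ^ q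
      ≤ (K * B) ^ q * t ^ m := by
    intro m
    have hbl : (∫ x in (0:ℝ)..(2 * Real.pi),
        ‖∑ ξ ∈ dyadicBlock m,
          σ ξ * fourierCoef f ξ * Complex.exp (Complex.I * (x:ℂ) * (ξ:ℂ))‖ ^ p) ^ (1/p)
        ≤ e2 (3/2) * (2*Real.pi)^(1/p) * (C * e2 |ρ| * Real.pi^s * B) * e2 (δ₀ * m) :=
      block_lp p s ρ C hp0 hs0 σ hσ hC f hf hper B hB0 hB m
    have h3 : (0:ℝ) ≤ (∫ x in (0:ℝ)..(2 * Real.pi),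
        ‖∑ ξ ∈ dyadicBlock m,
          σ ξ * fourierCoef f ξ * Complex.exp (Complex.I * (x:ℂ) * (ξ:ℂ))‖ ^ p) ^ (1/p) :=
      Real.rpow_nonneg (hXnn m) _
    have h4 := Real.rpow_le_rpow h3 hbl hq0.le
    have hsplit : (e2 (3/2) * (2*Real.pi)^(1/p) * (C * e2 |ρ| * Real.pi^s * B) * e2 (δ₀ * m)) ^ q
        = (K * B) ^ q * e2 (δ₀ * m * q) := by
      rw [show e2 (3/2) * (2*Real.pi)^(1/p) * (C * e2 |ρ| * Real.pi^s * B) * e2 (δ₀ * m)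
          = (K * B) * e2 (δ₀ * m) by rw [hKdef]; ring]
      rw [Real.mul_rpow hKB0 (e2_nonneg _), e2_rpow]
    rw [hsplit] at h4
    calc (2:ℝ) ^ ((m:ℝ) * r * q) *
        ((∫ x in (0:ℝ)..(2 * Real.pi),
            ‖∑ ξ ∈ dyadicBlock m,
              σ ξ * fourierCoef f ξ * Complex.exp (Complex.I * (x:ℂ) * (ξ:ℂ))‖ ^ p) ^ (1/p)) ^ q
        ≤ (2:ℝ) ^ ((m:ℝ) * r * q) * ((K * B) ^ q * e2 (δ₀ * m * q)) :=
          mul_le_mul_of_nonneg_left h4 (Real.rpow_nonneg (by norm_num) _)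
      _ = (K * B) ^ q * (e2 ((m:ℝ) * r * q) * e2 (δ₀ * m * q)) := by
          rw [show (2:ℝ) ^ ((m:ℝ) * r * q) = e2 ((m:ℝ) * r * q) from rfl]
          ring
      _ = (K * B) ^ q * t ^ m := by
          rw [← e2_add, htdef, e2_npow]
          congr 2
          ring
  have htermnn : ∀ m : ℕ, 0 ≤ (2:ℝ) ^ ((m:ℝ) * r * q) *
      ((∫ x in (0:ℝ)..(2 * Real.pi),
          ‖∑ ξ ∈ dyadicBlock m,
            σ ξ * fourierCoef f ξ * Complex.exp (Complex.I * (x:ℂ) * (ξ:ℂ))‖ ^ p) ^ (1/p)) ^ q :=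
    fun m => mul_nonneg (Real.rpow_nonneg (by norm_num) _)
      (Real.rpow_nonneg (Real.rpow_nonneg (hXnn m) _) _)
  have hsumR : Summable (fun m : ℕ => (K * B) ^ q * t ^ m) :=
    (summable_geometric_of_lt_one ht0.le ht1).mul_left _
  have hS : Summable (fun m : ℕ => (2:ℝ) ^ ((m:ℝ) * r * q) *
      ((∫ x in (0:ℝ)..(2 * Real.pi),
          ‖∑ ξ ∈ dyadicBlock m,
            σ ξ * fourierCoef f ξ * Complex.exp (Complex.I * (x:ℂ) * (ξ:ℂ))‖ ^ p) ^ (1/p)) ^ q) :=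
    Summable.of_nonneg_of_le htermnn key hsumR
  have htsum : (∑' m : ℕ, (2:ℝ) ^ ((m:ℝ) * r * q) *
      ((∫ x in (0:ℝ)..(2 * Real.pi),
          ‖∑ ξ ∈ dyadicBlock m,
            σ ξ * fourierCoef f ξ * Complex.exp (Complex.I * (x:ℂ) * (ξ:ℂ))‖ ^ p) ^ (1/p)) ^ q)
      ≤ (K * B) ^ q * (1 - t)⁻¹ := by
    calc _ ≤ ∑' m : ℕ, (K * B) ^ q * t ^ m := Summable.tsum_le_tsum key hS hsumR
      _ = (K * B) ^ q * (1 - t)⁻¹ := by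
          rw [tsum_mul_left, tsum_geometric_of_lt_one ht0.le ht1]
  have hfin := Real.rpow_le_rpow (tsum_nonneg htermnn) htsum (by positivity : (0:ℝ) ≤ 1/q)
  have hsplit2 : ((K * B) ^ q * (1 - t)⁻¹) ^ (1/q) = (K * B) * ((1-t)⁻¹)^(1/q) := by
    rw [Real.mul_rpow (Real.rpow_nonneg hKB0 q) (inv_nonneg.mpr h1t.le),
      ← Real.rpow_mul hKB0, mul_one_div_cancel (ne_of_gt hq0), Real.rpow_one]
  rw [hsplit2] at hfin
  calc _ ≤ K * B * ((1-t)⁻¹)^(1/q) := hfin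
    _ = K * ((1-t)⁻¹)^(1/q) * B := by ring
    _ ≤ K * ((1-t)⁻¹)^(1/q) * (A + B) := by
        apply mul_le_mul_of_nonneg_left (by linarith)
        exact mul_nonneg hK0 (Real.rpow_nonneg (inv_nonneg.mpr h1t.le) _)
end

section
/- Let r ∈ ℝ, 1 < α ≤ 2 with conjugate α', 0 < q < ∞, and r + 1 - 1/α < ρ ≤ 1. Then for any sequence (f̂(ξ)) ∈ ℓ^α(ℤ) and σ : ℤ → ℂ with |σ(ξ)| ≤ C|ξ|^{-ρ} (ξ ≠ 0), |σ(0)| ≤ C: (∑_{m=0}^{∞} 2^{mrq} (∑_{2^m ≤ |ξ| < 2^{m+1}} |σ(ξ)f̂(ξ)|)^q)^{1/q} ≤ C' · (∑_{m=0}^{∞} 2^{mq(r - ρ + 1/α')})^{1/q} · (∑_ξ |f̂(ξ)|^α)^{1/α}, and the series ∑_m 2^{mq(r-ρ+1/α')} converges. -/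
theorem triebel_core_estimate (r α α' q ρ C : ℝ)
    (hα0 : 1 < α) (hα1 : α ≤ 2) (hconj : 1/α + 1/α' = 1)
    (hq0 : 0 < q) (hρ : r + 1 - 1/α < ρ) (hρ1 : ρ ≤ 1)
    (σ : ℤ → ℂ) (hσ : ∀ ξ : ℤ, ξ ≠ 0 → ‖σ ξ‖ ≤ C * |(ξ:ℝ)| ^ (-ρ))
    (hσ0 : ‖σ 0‖ ≤ C) :
    Summable (fun m : ℕ => (2:ℝ) ^ ((m:ℝ) * q * (r - ρ + 1/α'))) ∧
    ∃ C' : ℝ, ∀ a : ℤ → ℂ, Summable (fun ξ : ℤ => ‖a ξ‖ ^ α) →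
      (∑' m : ℕ, (2:ℝ) ^ ((m:ℝ) * r * q) *
          (∑ ξ ∈ dyadicBlock m, ‖σ ξ * a ξ‖) ^ q) ^ (1/q)
        ≤ C' * (∑' m : ℕ, (2:ℝ) ^ ((m:ℝ) * q * (r - ρ + 1/α'))) ^ (1/q) *
            (∑' ξ : ℤ, ‖a ξ‖ ^ α) ^ (1/α) := by
  have hαpos : (0:ℝ) < α := by linarith
  have h1α : 1/α < 1 := by rw [div_lt_one hαpos]; exact hα0
  have h1α0 : 0 < 1/α := by positivity
  have hα' : 1/α' = 1 - 1/α := by linarith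
  have hα'pos : 0 < 1/α' := by rw [hα']; linarith
  have hα'pos' : 0 < α' := one_div_pos.mp hα'pos
  have hδ : r - ρ + 1/α' < 0 := by rw [hα']; linarith
  have hC : 0 ≤ C := le_trans (norm_nonneg _) hσ0
  have hqδ : q * (r - ρ + 1/α') < 0 := mul_neg_of_pos_of_neg hq0 hδ
  -- the geometric rewrite
  have hgeo : ∀ m : ℕ, (2:ℝ) ^ ((m:ℝ) * q * (r - ρ + 1/α'))
      = ((2:ℝ) ^ (q * (r - ρ + 1/α'))) ^ (m:ℕ) := by
    intro m
    rw [← Real.rpow_natCast ((2:ℝ) ^ (q * (r - ρ + 1/α'))) m,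
      ← Real.rpow_mul (by norm_num)]
    ring_nf
  have hS : Summable (fun m : ℕ => (2:ℝ) ^ ((m:ℝ) * q * (r - ρ + 1/α'))) := by
    simp_rw [hgeo]
    exact summable_geometric_of_lt_one (Real.rpow_nonneg (by norm_num) _)
      (Real.rpow_lt_one_of_one_lt_of_neg one_lt_two hqδ)
  refine ⟨hS, ?_⟩
  set K : ℝ := max 1 ((2:ℝ) ^ (-ρ)) with hK
  have hK0 : 0 < K := lt_of_lt_of_le one_pos (le_max_left _ _)
  set D : ℝ := C * K * (2:ℝ) ^ (3/α') with hD
  have hD0 : 0 ≤ D := by positivity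
  refine ⟨D, fun a ha => ?_⟩
  set T : ℝ := ∑' ξ : ℤ, ‖a ξ‖ ^ α with hT
  have hT0 : 0 ≤ T := tsum_nonneg fun _ => Real.rpow_nonneg (norm_nonneg _) _
  set S : ℝ := ∑' m : ℕ, (2:ℝ) ^ ((m:ℝ) * q * (r - ρ + 1/α')) with hSdef
  -- per-block bound
  have hblock : ∀ m : ℕ, ∑ ξ ∈ dyadicBlock m, ‖σ ξ * a ξ‖
      ≤ D * (2:ℝ) ^ ((m:ℝ) * (-ρ + 1/α')) * T ^ (1/α) := by
    intro m
    -- bound on σ on the block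
    have hσb : ∀ ξ ∈ dyadicBlock m, ‖σ ξ‖ ≤ C * K * (2:ℝ) ^ ((m:ℝ) * (-ρ)) := by
      intro ξ hξ
      simp only [dyadicBlock, Finset.mem_filter, Finset.mem_Icc] at hξ
      obtain ⟨-, h1, h2⟩ := hξ
      have hξne : ξ ≠ 0 := by
        intro h; rw [h] at h1; simp at h1
        have : (0:ℤ) < 2^m := by positivity
        omega
      have hlo : (2:ℝ) ^ ((m:ℝ)) ≤ |(ξ:ℝ)| := by
        rw [← Int.cast_abs]
        calc (2:ℝ) ^ ((m:ℝ)) = ((2^m : ℤ) : ℝ) := by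
              rw [Real.rpow_natCast]; push_cast; ring
          _ ≤ _ := by exact_mod_cast h1
      have hhi : |(ξ:ℝ)| ≤ (2:ℝ) ^ ((m:ℝ)) * 2 := by
        rw [← Int.cast_abs]
        calc ((|ξ| : ℤ) : ℝ) ≤ ((2^(m+1) : ℤ) : ℝ) := by exact_mod_cast h2.le
          _ = (2:ℝ) ^ ((m:ℝ)) * 2 := by
              rw [Real.rpow_natCast]; push_cast; ring
      have h2m : (0:ℝ) < (2:ℝ) ^ ((m:ℝ)) := Real.rpow_pos_of_pos two_pos _
      have hmain : |(ξ:ℝ)| ^ (-ρ) ≤ K * (2:ℝ) ^ ((m:ℝ) * (-ρ)) := by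
        rw [show (m:ℝ) * (-ρ) = (m:ℝ) * (-ρ) from rfl, Real.rpow_mul (by norm_num : (0:ℝ) ≤ 2)]
        rcases le_or_gt (-ρ) 0 with hc | hc
        · calc |(ξ:ℝ)| ^ (-ρ) ≤ ((2:ℝ) ^ ((m:ℝ))) ^ (-ρ) :=
                Real.rpow_le_rpow_of_nonpos h2m hlo hc
            _ ≤ K * ((2:ℝ) ^ ((m:ℝ))) ^ (-ρ) := by
                nlinarith [Real.rpow_pos_of_pos h2m (-ρ), le_max_left (1:ℝ) ((2:ℝ) ^ (-ρ))]
        · calc |(ξ:ℝ)| ^ (-ρ) ≤ ((2:ℝ) ^ ((m:ℝ)) * 2) ^ (-ρ) :=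
                Real.rpow_le_rpow (abs_nonneg _) hhi hc.le
            _ = ((2:ℝ) ^ ((m:ℝ))) ^ (-ρ) * (2:ℝ) ^ (-ρ) :=
                Real.mul_rpow h2m.le (by norm_num)
            _ ≤ ((2:ℝ) ^ ((m:ℝ))) ^ (-ρ) * K := by
                have := Real.rpow_pos_of_pos h2m (-ρ)
                nlinarith [le_max_right (1:ℝ) ((2:ℝ) ^ (-ρ))]
            _ = K * ((2:ℝ) ^ ((m:ℝ))) ^ (-ρ) := mul_comm _ _
      calc ‖σ ξ‖ ≤ C * |(ξ:ℝ)| ^ (-ρ) := hσ ξ hξne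
        _ ≤ C * (K * (2:ℝ) ^ ((m:ℝ) * (-ρ))) := by
            exact mul_le_mul_of_nonneg_left hmain hC
        _ = C * K * (2:ℝ) ^ ((m:ℝ) * (-ρ)) := by ring
    -- Hölder
    have hcard : ((dyadicBlock m).card : ℝ) ≤ (2:ℝ) ^ ((m:ℝ) + 3) := by
      have h1 : (dyadicBlock m).card ≤ (Finset.Icc (-(2^(m+1) : ℤ)) (2^(m+1))).card :=
        Finset.card_filter_le _ _
      have h2 : (Finset.Icc (-(2^(m+1) : ℤ)) (2^(m+1))).card = 2^(m+2) + 1 := by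
        rw [Int.card_Icc]
        have : (2:ℤ)^(m+1) + 1 - (-(2^(m+1))) = ((2^(m+2) + 1 : ℕ) : ℤ) := by
          push_cast; ring
        rw [this, Int.toNat_natCast]
      have h3 : ((dyadicBlock m).card : ℝ) ≤ ((2^(m+2) + 1 : ℕ) : ℝ) := by
        exact_mod_cast h1.trans_eq h2
      refine h3.trans ?_
      have : ((2^(m+2) + 1 : ℕ) : ℝ) ≤ (2:ℝ)^(m+3) := by
        push_cast
        have : (1:ℝ) ≤ 2^(m+2) := one_le_pow₀ (by norm_num)
        calc (2:ℝ)^(m+2) + 1 ≤ 2^(m+2) + 2^(m+2) := by linarith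
          _ = 2^(m+3) := by ring
      refine this.trans_eq ?_
      rw [show ((m:ℝ) + 3) = ((m + 3 : ℕ) : ℝ) by push_cast; ring, Real.rpow_natCast]
    have hholder : ∑ ξ ∈ dyadicBlock m, ‖a ξ‖
        ≤ T ^ (1/α) * (2:ℝ) ^ (((m:ℝ) + 3) / α') := by
      have hpq : Real.HolderConjugate α α' :=
        ⟨by rw [inv_one, ← one_div, ← one_div]; exact hconj, hαpos, hα'pos'⟩
      have := Real.inner_le_Lp_mul_Lq_of_nonneg (dyadicBlock m)
        (f := fun ξ => ‖a ξ‖) (g := fun _ => 1) hpq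
        (fun i _ => norm_nonneg _) (fun i _ => zero_le_one)
      simp only [mul_one, Real.one_rpow, Finset.sum_const, nsmul_eq_mul] at this
      refine this.trans ?_
      have hsumT : ∑ ξ ∈ dyadicBlock m, ‖a ξ‖ ^ α ≤ T :=
        Summable.sum_le_tsum _ (fun ξ _ => Real.rpow_nonneg (norm_nonneg _) _) ha
      have hL : (∑ ξ ∈ dyadicBlock m, ‖a ξ‖ ^ α) ^ (1/α) ≤ T ^ (1/α) :=
        Real.rpow_le_rpow (Finset.sum_nonneg fun ξ _ =>
          Real.rpow_nonneg (norm_nonneg _) _) hsumT h1α0.le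
      have hR : (((dyadicBlock m).card : ℝ)) ^ (1/α') ≤ (2:ℝ) ^ (((m:ℝ) + 3) / α') := by
        calc (((dyadicBlock m).card : ℝ)) ^ (1/α')
            ≤ ((2:ℝ) ^ ((m:ℝ) + 3)) ^ (1/α') :=
              Real.rpow_le_rpow (Nat.cast_nonneg _) hcard hα'pos.le
          _ = (2:ℝ) ^ (((m:ℝ) + 3) / α') := by
              rw [← Real.rpow_mul (by norm_num)]; ring_nf
      exact mul_le_mul hL hR (Real.rpow_nonneg (Nat.cast_nonneg _) _)
        (Real.rpow_nonneg hT0 _)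
    calc ∑ ξ ∈ dyadicBlock m, ‖σ ξ * a ξ‖
        ≤ ∑ ξ ∈ dyadicBlock m, C * K * (2:ℝ) ^ ((m:ℝ) * (-ρ)) * ‖a ξ‖ := by
          refine Finset.sum_le_sum fun ξ hξ => ?_
          rw [norm_mul]
          exact mul_le_mul_of_nonneg_right (hσb ξ hξ) (norm_nonneg _)
      _ = C * K * (2:ℝ) ^ ((m:ℝ) * (-ρ)) * ∑ ξ ∈ dyadicBlock m, ‖a ξ‖ := by
          rw [Finset.mul_sum]
      _ ≤ C * K * (2:ℝ) ^ ((m:ℝ) * (-ρ)) * (T ^ (1/α) * (2:ℝ) ^ (((m:ℝ) + 3) / α')) := by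
          exact mul_le_mul_of_nonneg_left hholder (by positivity)
      _ = D * (2:ℝ) ^ ((m:ℝ) * (-ρ + 1/α')) * T ^ (1/α) := by
          rw [hD]
          rw [show ((m:ℝ) + 3) / α' = (m:ℝ) * (1/α') + 3/α' by rw [add_div, mul_one_div]]
          rw [show (m:ℝ) * (-ρ + 1/α') = (m:ℝ) * (-ρ) + (m:ℝ) * (1/α') by ring]
          rw [Real.rpow_add two_pos, Real.rpow_add two_pos]
          ring
  -- termwise bound
  have hterm : ∀ m : ℕ, (2:ℝ) ^ ((m:ℝ) * r * q) *
      (∑ ξ ∈ dyadicBlock m, ‖σ ξ * a ξ‖) ^ q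
      ≤ (D * T ^ (1/α)) ^ q * (2:ℝ) ^ ((m:ℝ) * q * (r - ρ + 1/α')) := by
    intro m
    have hB0 : (0:ℝ) ≤ ∑ ξ ∈ dyadicBlock m, ‖σ ξ * a ξ‖ :=
      Finset.sum_nonneg fun ξ _ => norm_nonneg _
    have h1 : (∑ ξ ∈ dyadicBlock m, ‖σ ξ * a ξ‖) ^ q
        ≤ (D * (2:ℝ) ^ ((m:ℝ) * (-ρ + 1/α')) * T ^ (1/α)) ^ q :=
      Real.rpow_le_rpow hB0 (hblock m) hq0.le
    calc (2:ℝ) ^ ((m:ℝ) * r * q) * (∑ ξ ∈ dyadicBlock m, ‖σ ξ * a ξ‖) ^ q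
        ≤ (2:ℝ) ^ ((m:ℝ) * r * q) * (D * (2:ℝ) ^ ((m:ℝ) * (-ρ + 1/α')) * T ^ (1/α)) ^ q := by
          exact mul_le_mul_of_nonneg_left h1 (Real.rpow_nonneg (by norm_num) _)
      _ = (D * T ^ (1/α)) ^ q * (2:ℝ) ^ ((m:ℝ) * q * (r - ρ + 1/α')) := by
          rw [show D * (2:ℝ) ^ ((m:ℝ) * (-ρ + 1/α')) * T ^ (1/α)
              = (D * T ^ (1/α)) * (2:ℝ) ^ ((m:ℝ) * (-ρ + 1/α')) by ring]
          rw [Real.mul_rpow (by positivity) (Real.rpow_nonneg (by norm_num) _),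
            ← Real.rpow_mul (by norm_num : (0:ℝ) ≤ 2),
            show (m:ℝ)*q*(r-ρ+1/α') = (m:ℝ)*r*q + (m:ℝ)*(-ρ+1/α')*q by ring,
            Real.rpow_add two_pos]
          ring
  have hsumL : Summable (fun m : ℕ => (2:ℝ) ^ ((m:ℝ) * r * q) *
      (∑ ξ ∈ dyadicBlock m, ‖σ ξ * a ξ‖) ^ q) := by
    refine Summable.of_nonneg_of_le (fun m => ?_) hterm (hS.mul_left _)
    have hB0 : (0:ℝ) ≤ ∑ ξ ∈ dyadicBlock m, ‖σ ξ * a ξ‖ :=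
      Finset.sum_nonneg fun ξ _ => norm_nonneg _
    positivity
  have htsum : (∑' m : ℕ, (2:ℝ) ^ ((m:ℝ) * r * q) *
      (∑ ξ ∈ dyadicBlock m, ‖σ ξ * a ξ‖) ^ q)
      ≤ (D * T ^ (1/α)) ^ q * S := by
    calc (∑' m : ℕ, (2:ℝ) ^ ((m:ℝ) * r * q) *
        (∑ ξ ∈ dyadicBlock m, ‖σ ξ * a ξ‖) ^ q)
        ≤ ∑' m : ℕ, (D * T ^ (1/α)) ^ q * (2:ℝ) ^ ((m:ℝ) * q * (r - ρ + 1/α')) :=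
          Summable.tsum_le_tsum hterm hsumL (hS.mul_left _)
      _ = (D * T ^ (1/α)) ^ q * S := tsum_mul_left
  have hL0 : (0:ℝ) ≤ ∑' m : ℕ, (2:ℝ) ^ ((m:ℝ) * r * q) *
      (∑ ξ ∈ dyadicBlock m, ‖σ ξ * a ξ‖) ^ q := by
    refine tsum_nonneg fun m => ?_
    have hB0 : (0:ℝ) ≤ ∑ ξ ∈ dyadicBlock m, ‖σ ξ * a ξ‖ :=
      Finset.sum_nonneg fun ξ _ => norm_nonneg _
    positivity
  have hS0 : (0:ℝ) ≤ S := tsum_nonneg fun m => Real.rpow_nonneg (by norm_num) _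
  calc (∑' m : ℕ, (2:ℝ) ^ ((m:ℝ) * r * q) *
      (∑ ξ ∈ dyadicBlock m, ‖σ ξ * a ξ‖) ^ q) ^ (1/q)
      ≤ ((D * T ^ (1/α)) ^ q * S) ^ (1/q) :=
        Real.rpow_le_rpow hL0 htsum (by positivity)
    _ = (D * T ^ (1/α)) * S ^ (1/q) := by
        rw [Real.mul_rpow (Real.rpow_nonneg (by positivity) _) hS0,
          ← Real.rpow_mul (by positivity), mul_one_div_cancel hq0.ne', Real.rpow_one]
    _ = D * S ^ (1/q) * T ^ (1/α) := by ring
end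

section
/- Let 0 ≤ ρ ≤ 1, σ : ℤ → ℂ with |σ(ξ)| ≤ C|ξ|^{-ρ} for ξ ≠ 0, q ∈ (1,∞), r ∈ ℝ, and s ∈ (0,1] with r + 1/2 - ρ < s. Then there is C' such that for every 2π-periodic Hölder continuous f of order s: (∑_{m=0}^{∞} 2^{mrq} (∑_{2^m ≤ |ξ| < 2^{m+1}} |σ(ξ)f̂(ξ)|)^q)^{1/q} ≤ C' ‖f‖_{Λ^s}. -/
open MeasureTheory Complex Real Finset AddCircle

lemma coef_eq (f : ℝ → ℂ) (hper : Function.Periodic f (2*Real.pi)) (n : ℤ) :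
    haveI : Fact (0 < 2*Real.pi) := ⟨by positivity⟩
    fourierCoeff (hper.lift) n = fourierCoef f n := by
  haveI : Fact (0 < 2*Real.pi) := ⟨by positivity⟩
  rw [fourierCoeff_eq_intervalIntegral _ n 0, fourierCoef, zero_add]
  have : ∀ x : ℝ, fourier (-n) (x : AddCircle (2*Real.pi)) • hper.lift (x : AddCircle (2*Real.pi))
      = f x * Complex.exp (-(Complex.I * (n:ℂ) * (x:ℂ))) := by
    intro x
    rw [fourier_coe_apply, Function.Periodic.lift_coe, smul_eq_mul, mul_comm]
    congr 1
    rw [Complex.exp_eq_exp_iff_exists_int]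
    refine ⟨0, ?_⟩
    push_cast
    have hpi : (Real.pi : ℂ) ≠ 0 := by
      simpa using Real.pi_ne_zero
    field_simp
    ring
  rw [intervalIntegral.integral_congr (fun x _ => this x)]
  rw [Complex.real_smul]
  push_cast
  ring_nf

lemma bessel_s15 (F : AddCircle (2*Real.pi) → ℂ) (hFc : Continuous F) (M : ℝ)
    (hM : ∀ x, ‖F x‖ ≤ M) (t : Finset ℤ) :
    haveI : Fact (0 < 2*Real.pi) := ⟨by positivity⟩
    ∑ ξ ∈ t, ‖fourierCoeff F ξ‖ ^ 2 ≤ M ^ 2 := by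
  haveI : Fact (0 < 2*Real.pi) := ⟨by positivity⟩
  have hM0 : 0 ≤ M := le_trans (norm_nonneg _) (hM 0)
  have hF2 : MemLp F 2 haarAddCircle :=
    MemLp.of_bound hFc.aestronglyMeasurable M (Filter.Eventually.of_forall (fun x => hM x))
  set Φ := hF2.toLp F with hΦ
  have hcoeff : ∀ n : ℤ, fourierCoeff (Φ : AddCircle (2*Real.pi) → ℂ) n = fourierCoeff F n := by
    intro n
    apply integral_congr_ae
    filter_upwards [hF2.coeFn_toLp] with x hx
    rw [hx]
  have hb : ∀ n : ℤ, ‖fourierCoeff F n‖ = ‖(fourierBasis.repr Φ) n‖ := by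
    intro n
    rw [fourierBasis_repr, hcoeff n]
  have key : ∑ ξ ∈ t, ‖fourierCoeff F ξ‖ ^ 2 ≤ ‖Φ‖ ^ 2 := by
    calc ∑ ξ ∈ t, ‖fourierCoeff F ξ‖ ^ 2
        = ∑ ξ ∈ t, ‖(inner ℂ (fourierBasis (T := 2*Real.pi) ξ) Φ : ℂ)‖ ^ 2 := by
          refine Finset.sum_congr rfl fun ξ _ => ?_
          rw [hb ξ, fourierBasis.repr_apply_apply]
      _ ≤ ‖Φ‖ ^ 2 := fourierBasis.orthonormal.sum_inner_products_le Φ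
  refine key.trans ?_
  have hnorm : ‖Φ‖ ≤ M := by
    rw [hΦ, Lp.norm_toLp]
    have := eLpNorm_le_of_ae_bound (μ := haarAddCircle) (p := 2)
      (f := F) (C := M) (Filter.Eventually.of_forall (fun x => hM x))
    rw [measure_univ] at this
    simp only [ENNReal.one_rpow, one_mul] at this
    exact ENNReal.toReal_le_of_le_ofReal hM0 this
  exact pow_le_pow_left₀ (norm_nonneg _) hnorm 2

lemma lift_cont (f : ℝ → ℂ) (hf : Continuous f) (hper : Function.Periodic f (2*Real.pi)) :
    Continuous hper.lift :=
  hf.quotient_liftOn' _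

lemma coef_shift (f : ℝ → ℂ) (hf : Continuous f) (hper : Function.Periodic f (2*Real.pi))
    (h : ℝ) (n : ℤ) :
    fourierCoef (fun x => f (x - h)) n
      = Complex.exp (-(Complex.I * (n:ℂ) * (h:ℂ))) * fourierCoef f n := by
  set φ : ℝ → ℂ := fun u => f u * Complex.exp (-(Complex.I * (n:ℂ) * ((u:ℂ) + (h:ℂ)))) with hφ
  have hstep1 : ∀ x : ℝ, f (x - h) * Complex.exp (-(Complex.I * (n:ℂ) * (x:ℂ))) = φ (x - h) := by
    intro x
    rw [hφ]
    push_cast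
    ring_nf
  have hφper : Function.Periodic φ (2*Real.pi) := by
    intro u
    rw [hφ]
    simp only
    rw [hper u]
    congr 1
    have : -(Complex.I * (n:ℂ) * (((u + 2*Real.pi :ℝ):ℂ) + (h:ℂ)))
        = -(Complex.I * (n:ℂ) * ((u:ℂ) + (h:ℂ))) + (-n : ℤ) * (2 * (Real.pi:ℂ) * Complex.I) := by
      push_cast; ring
    rw [this, Complex.exp_add, Complex.exp_int_mul_two_pi_mul_I, mul_one]
  have hint : (∫ x in (0:ℝ)..(2*Real.pi), f (x - h) * Complex.exp (-(Complex.I * (n:ℂ) * (x:ℂ))))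
      = ∫ x in (0:ℝ)..(2*Real.pi), φ x := by
    rw [intervalIntegral.integral_congr (fun x _ => hstep1 x),
      intervalIntegral.integral_comp_sub_right φ h]
    have h0 : (0:ℝ) - h = 0 - h := rfl
    have := hφper.intervalIntegral_add_eq (0 - h) 0
    rw [zero_add] at this
    rw [← this]
    norm_num
    congr 1
    ring
  have hsplit : ∀ u : ℝ, φ u = Complex.exp (-(Complex.I * (n:ℂ) * (h:ℂ)))
      * (f u * Complex.exp (-(Complex.I * (n:ℂ) * (u:ℂ)))) := by
    intro u
    rw [hφ]
    simp only
    rw [show -(Complex.I * (n:ℂ) * ((u:ℂ) + (h:ℂ)))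
      = -(Complex.I * (n:ℂ) * (h:ℂ)) + -(Complex.I * (n:ℂ) * (u:ℂ)) by ring, Complex.exp_add]
    ring
  rw [fourierCoef, fourierCoef, hint, intervalIntegral.integral_congr (fun u _ => hsplit u),
    intervalIntegral.integral_const_mul]
  ring

lemma osc (θ : ℝ) (h1 : Real.pi/2 ≤ |θ|) (h2 : |θ| ≤ Real.pi) :
    2 ≤ ‖1 - Complex.exp (-(Complex.I * (θ:ℂ)))‖ ^ 2 := by
  have harg : -(Complex.I * (θ:ℂ)) = ((-θ : ℝ) : ℂ) * Complex.I := by push_cast; ring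
  rw [harg, Complex.sq_norm, Complex.normSq_apply]
  simp only [Complex.sub_re, Complex.one_re, Complex.exp_ofReal_mul_I_re, Complex.sub_im,
    Complex.one_im, Complex.exp_ofReal_mul_I_im]
  have hcos : Real.cos θ ≤ 0 := by
    rw [← Real.cos_abs]
    exact Real.cos_nonpos_of_pi_div_two_le_of_le h1 (h2.trans (by nlinarith [Real.pi_pos]))
  rw [Real.cos_neg, Real.sin_neg]
  nlinarith [Real.sin_sq_add_cos_sq θ]

lemma coef_sub (f g : ℝ → ℂ) (hf : Continuous f) (hg : Continuous g) (n : ℤ) :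
    fourierCoef (fun x => f x - g x) n = fourierCoef f n - fourierCoef g n := by
  have hc : Continuous fun x : ℝ => Complex.exp (-(Complex.I * (n:ℂ) * (x:ℂ))) := by fun_prop
  unfold fourierCoef
  rw [intervalIntegral.integral_congr (g := fun x => f x * Complex.exp (-(Complex.I * (n:ℂ) * (x:ℂ)))
      - g x * Complex.exp (-(Complex.I * (n:ℂ) * (x:ℂ)))) (fun x _ => sub_mul (f x) (g x) _),
    intervalIntegral.integral_sub ((show Continuous fun x => f x * Complex.exp (-(Complex.I * (n:ℂ) * (x:ℂ))) from hf.mul hc).intervalIntegrable _ _)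
      ((show Continuous fun x => g x * Complex.exp (-(Complex.I * (n:ℂ) * (x:ℂ))) from hg.mul hc).intervalIntegrable _ _), mul_sub]

lemma card_block (m : ℕ) : ((dyadicBlock m).card : ℝ) ≤ 8 * (2:ℝ) ^ (m:ℝ) := by
  have h1 : (dyadicBlock m).card ≤ (Finset.Icc (-(2^(m+1) : ℤ)) (2^(m+1))).card :=
    Finset.card_filter_le _ _
  rw [Int.card_Icc] at h1
  have h2 : ((2:ℤ)^(m+1) + 1 - -(2^(m+1))) = ((2^(m+2)+1 : ℕ) : ℤ) := by push_cast; ring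
  rw [h2, Int.toNat_natCast] at h1
  have h3 : (2:ℕ)^(m+2)+1 ≤ 2^(m+3) := by
    have := Nat.one_le_two_pow (n := m+2)
    have h4 : (2:ℕ)^(m+3) = 2 * 2^(m+2) := by rw [pow_succ]; ring
    omega
  have h5 : ((dyadicBlock m).card : ℝ) ≤ ((2:ℝ)^(m+3 : ℕ)) := by
    exact_mod_cast h1.trans h3
  refine h5.trans ?_
  rw [← Real.rpow_natCast 2 (m+3)]
  push_cast
  rw [Real.rpow_add (by norm_num), Real.rpow_natCast]
  norm_num [mul_comm, Real.rpow_natCast]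

set_option maxHeartbeats 1000000 in
lemma block_est (ρ C s : ℝ) (hρ0 : 0 ≤ ρ) (hs0 : 0 < s) (hC0 : 0 ≤ C)
    (σ : ℤ → ℂ) (hσ : ∀ ξ : ℤ, ξ ≠ 0 → ‖σ ξ‖ ≤ C * |(ξ:ℝ)| ^ (-ρ))
    (f : ℝ → ℂ) (hf : Continuous f) (hper : Function.Periodic f (2*Real.pi))
    (B : ℝ) (hB0 : 0 ≤ B)
    (hHol : ∀ x y : ℝ, ‖f (x - y) - f x‖ ≤ B * |y| ^ s) (m : ℕ) :
    ∑ ξ ∈ dyadicBlock m, ‖σ ξ * fourierCoef f ξ‖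
      ≤ (4*C*B*Real.pi^s) * (2:ℝ) ^ ((m:ℝ)*(1/2 - ρ - s)) := by
  haveI : Fact (0 < 2*Real.pi) := ⟨by positivity⟩
  have hπ := Real.pi_pos
  set h : ℝ := Real.pi / 2^(m+1) with hh
  have hh0 : 0 < h := by positivity
  set g : ℝ → ℂ := fun x => f x - f (x - h) with hg
  have hfsh : Continuous fun x : ℝ => f (x - h) := hf.comp (continuous_id.sub continuous_const)
  have hgc : Continuous g := hf.sub hfsh
  have hpersh : Function.Periodic (fun x : ℝ => f (x - h)) (2*Real.pi) := by
    intro x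
    simp only
    rw [show x + 2*Real.pi - h = (x - h) + 2*Real.pi by ring, hper]
  have hgper : Function.Periodic g (2*Real.pi) := hper.sub hpersh
  -- blocks membership facts
  have hmem : ∀ ξ ∈ dyadicBlock m, ξ ≠ 0 ∧ ((2:ℝ)^m ≤ |(ξ:ℝ)| ∧ |(ξ:ℝ)| ≤ (2:ℝ)^(m+1)) := by
    intro ξ hξ
    simp only [dyadicBlock, Finset.mem_filter, Finset.mem_Icc] at hξ
    obtain ⟨-, hlo, hhi⟩ := hξ
    have hpos : (0:ℤ) < 2^m := by positivity
    refine ⟨?_, ?_, ?_⟩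
    · rintro rfl; simp at hlo; omega
    · rw [← Int.cast_abs]; exact_mod_cast hlo
    · rw [← Int.cast_abs]; exact_mod_cast hhi.le
  -- coefficient identity
  have hco : ∀ ξ : ℤ, fourierCoef g ξ
      = (1 - Complex.exp (-(Complex.I * (ξ:ℂ) * (h:ℂ)))) * fourierCoef f ξ := by
    intro ξ
    rw [hg]
    rw [coef_sub f (fun x => f (x - h)) hf hfsh, coef_shift f hf hper h ξ]
    ring
  -- Bessel bound for g
  have hbg : ∑ ξ ∈ dyadicBlock m, ‖fourierCoef g ξ‖ ^ 2 ≤ (B * h^s)^2 := by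
    have hlift : ∀ z : AddCircle (2*Real.pi), ‖hgper.lift z‖ ≤ B * h^s := by
      intro z
      induction z using QuotientAddGroup.induction_on with
      | H x =>
        rw [Function.Periodic.lift_coe]
        have : ‖g x‖ = ‖f (x - h) - f x‖ := by
          rw [hg]; exact norm_sub_rev _ _
        rw [this]
        have := hHol x h
        rwa [abs_of_pos hh0] at this
    have hB2 := bessel_s15 hgper.lift (lift_cont g hgc hgper) (B * h^s) hlift (dyadicBlock m)
    refine le_trans (le_of_eq (Finset.sum_congr rfl fun ξ _ => ?_)) hB2
    rw [coef_eq g hgper ξ]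
  -- pointwise oscillation bound
  have hpt : ∀ ξ ∈ dyadicBlock m,
      ‖fourierCoef f ξ‖ ^ 2 ≤ ‖fourierCoef g ξ‖ ^ 2 := by
    intro ξ hξ
    obtain ⟨hξ0, hlo, hhi⟩ := hmem ξ hξ
    rw [hco ξ, norm_mul, mul_pow]
    have harg : -(Complex.I * (ξ:ℂ) * (h:ℂ)) = -(Complex.I * ((((ξ:ℝ)*h : ℝ)):ℂ)) := by
      push_cast; ring
    have habs : |(ξ:ℝ)*h| = |(ξ:ℝ)| * h := by
      rw [abs_mul, abs_of_pos hh0]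
    have hlo2 : Real.pi/2 ≤ |(ξ:ℝ)*h| := by
      rw [habs]
      have : Real.pi/2 = (2:ℝ)^m * h := by
        rw [hh, pow_succ]; field_simp
      rw [this]
      exact mul_le_mul_of_nonneg_right hlo hh0.le
    have hhi2 : |(ξ:ℝ)*h| ≤ Real.pi := by
      rw [habs]
      have : Real.pi = (2:ℝ)^(m+1) * h := by
        rw [hh]; field_simp
      rw [this]
      exact mul_le_mul_of_nonneg_right hhi hh0.le
    have h2le := osc ((ξ:ℝ)*h) hlo2 hhi2
    rw [← harg] at h2le
    exact le_mul_of_one_le_left (by positivity) (by linarith)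
  -- sigma bound
  set P : ℝ := C * (2:ℝ) ^ (-((m:ℝ)*ρ)) with hP
  have hP0 : 0 ≤ P := by positivity
  have hσP : ∀ ξ ∈ dyadicBlock m, ‖σ ξ‖ ≤ P := by
    intro ξ hξ
    obtain ⟨hξ0, hlo, -⟩ := hmem ξ hξ
    refine (hσ ξ hξ0).trans ?_
    rw [hP]
    refine mul_le_mul_of_nonneg_left ?_ hC0
    have hm0 : (0:ℝ) < (2:ℝ)^m := by positivity
    have := Real.rpow_le_rpow_of_nonpos hm0 hlo (neg_nonpos.2 hρ0)
    refine this.trans (le_of_eq ?_)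
    rw [← Real.rpow_natCast 2 m, ← Real.rpow_mul (by norm_num)]
    ring_nf
  -- Cauchy-Schwarz
  set S : ℝ := ∑ ξ ∈ dyadicBlock m, ‖σ ξ * fourierCoef f ξ‖ with hS
  have hS0 : 0 ≤ S := Finset.sum_nonneg fun ξ _ => norm_nonneg _
  have hCS : S^2 ≤ ((dyadicBlock m).card : ℝ)
      * ∑ ξ ∈ dyadicBlock m, ‖σ ξ * fourierCoef f ξ‖ ^ 2 := by
    exact_mod_cast sq_sum_le_card_mul_sum_sq (s := dyadicBlock m)
      (f := fun ξ => ‖σ ξ * fourierCoef f ξ‖)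
  have hsum2 : ∑ ξ ∈ dyadicBlock m, ‖σ ξ * fourierCoef f ξ‖ ^ 2
      ≤ P^2 * (B * h^s)^2 := by
    have step : ∀ ξ ∈ dyadicBlock m, ‖σ ξ * fourierCoef f ξ‖ ^ 2
        ≤ P^2 * ‖fourierCoef g ξ‖ ^ 2 := by
      intro ξ hξ
      rw [norm_mul, mul_pow]
      refine mul_le_mul (pow_le_pow_left₀ (norm_nonneg _) (hσP ξ hξ) 2)
        (hpt ξ hξ) (by positivity) (by positivity)
    refine (Finset.sum_le_sum step).trans ?_
    rw [← Finset.mul_sum]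
    exact mul_le_mul_of_nonneg_left hbg (by positivity)
  -- h^s bound
  have hhs : B * h^s ≤ B * Real.pi^s * (2:ℝ) ^ (-((m:ℝ)*s)) := by
    have h1 : h^s = Real.pi^s / ((2:ℝ)^(m+1))^s := by
      rw [hh, Real.div_rpow hπ.le (by positivity)]
    have h2 : ((2:ℝ)^m)^s ≤ ((2:ℝ)^(m+1))^s :=
      Real.rpow_le_rpow (by positivity) (pow_le_pow_right₀ (by norm_num) (Nat.le_succ m)) hs0.le
    have h3 : h^s ≤ Real.pi^s / ((2:ℝ)^m)^s := by
      rw [h1]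
      exact div_le_div_of_nonneg_left (by positivity) (by positivity) h2
    have h4 : Real.pi^s / ((2:ℝ)^m)^s = Real.pi^s * (2:ℝ) ^ (-((m:ℝ)*s)) := by
      rw [← Real.rpow_natCast 2 m, ← Real.rpow_mul (by norm_num), div_eq_mul_inv,
        ← Real.rpow_neg (by norm_num)]
    calc B * h^s ≤ B * (Real.pi^s / ((2:ℝ)^m)^s) := mul_le_mul_of_nonneg_left h3 hB0
      _ = B * Real.pi^s * (2:ℝ) ^ (-((m:ℝ)*s)) := by rw [h4]; ring
  -- final assembly
  set RHS : ℝ := (4*C*B*Real.pi^s) * (2:ℝ) ^ ((m:ℝ)*(1/2 - ρ - s)) with hRHS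
  have hRHS0 : 0 ≤ RHS := by positivity
  have hBh0 : 0 ≤ B * h^s := by positivity
  have hSsq : S^2 ≤ RHS^2 := by
    have hM2 : (B * h^s)^2 ≤ (B * Real.pi^s * (2:ℝ) ^ (-((m:ℝ)*s)))^2 :=
      pow_le_pow_left₀ hBh0 hhs 2
    have hc1 : S^2 ≤ ((dyadicBlock m).card : ℝ) * (P^2 * (B * Real.pi^s * (2:ℝ) ^ (-((m:ℝ)*s)))^2) :=
      hCS.trans (mul_le_mul_of_nonneg_left (hsum2.trans
        (mul_le_mul_of_nonneg_left hM2 (by positivity))) (by positivity))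
    have hc2 : ((dyadicBlock m).card : ℝ) * (P^2 * (B * Real.pi^s * (2:ℝ) ^ (-((m:ℝ)*s)))^2)
        ≤ (8 * (2:ℝ)^(m:ℝ)) * (P^2 * (B * Real.pi^s * (2:ℝ) ^ (-((m:ℝ)*s)))^2) :=
      mul_le_mul_of_nonneg_right (card_block m) (by positivity)
    have hX : (2:ℝ)^((m:ℝ)) * ((2:ℝ)^(-((m:ℝ)*ρ)))^2 * ((2:ℝ)^(-((m:ℝ)*s)))^2
        = ((2:ℝ)^((m:ℝ)*(1/2 - ρ - s)))^2 := by
      have sq2 : ∀ a : ℝ, ((2:ℝ)^a)^2 = (2:ℝ)^(a*2) := fun a => by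
        rw [← Real.rpow_natCast ((2:ℝ)^a) 2, ← Real.rpow_mul (by norm_num)]
        norm_num
      rw [sq2, sq2, sq2, ← Real.rpow_add (by norm_num : (0:ℝ) < 2),
        ← Real.rpow_add (by norm_num : (0:ℝ) < 2)]
      congr 1
      ring
    have hc3 : (8 * (2:ℝ)^(m:ℝ)) * (P^2 * (B * Real.pi^s * (2:ℝ) ^ (-((m:ℝ)*s)))^2)
        ≤ RHS^2 := by
      rw [hRHS, hP]
      have expand : (8 * (2:ℝ)^(m:ℝ)) * ((C * (2:ℝ)^(-((m:ℝ)*ρ)))^2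
            * (B * Real.pi^s * (2:ℝ) ^ (-((m:ℝ)*s)))^2)
          = 8 * (C^2 * B^2 * (Real.pi^s)^2)
            * ((2:ℝ)^((m:ℝ)) * ((2:ℝ)^(-((m:ℝ)*ρ)))^2 * ((2:ℝ)^(-((m:ℝ)*s)))^2) := by ring
      rw [expand, hX]
      have target : ((4*C*B*Real.pi^s) * (2:ℝ) ^ ((m:ℝ)*(1/2 - ρ - s)))^2
          = 16 * (C^2 * B^2 * (Real.pi^s)^2) * ((2:ℝ)^((m:ℝ)*(1/2 - ρ - s)))^2 := by ring
      rw [target]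
      have hY : (0:ℝ) ≤ (C^2 * B^2 * (Real.pi^s)^2) * ((2:ℝ)^((m:ℝ)*(1/2 - ρ - s)))^2 := by
        positivity
      nlinarith [hY]
    exact hc1.trans (hc2.trans hc3)
  calc S = Real.sqrt (S^2) := (Real.sqrt_sq hS0).symm
    _ ≤ Real.sqrt (RHS^2) := Real.sqrt_le_sqrt hSsq
    _ = RHS := Real.sqrt_sq hRHS0

set_option maxHeartbeats 1000000 in
theorem holder_triebel_core (ρ C r s q : ℝ)
    (hρ0 : 0 ≤ ρ) (hρ1 : ρ ≤ 1) (hq0 : 1 < q)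
    (hs0 : 0 < s) (hs1 : s ≤ 1) (hrs : r + 1/2 - ρ < s)
    (σ : ℤ → ℂ) (hσ : ∀ ξ : ℤ, ξ ≠ 0 → ‖σ ξ‖ ≤ C * |(ξ:ℝ)| ^ (-ρ)) :
    ∃ C' : ℝ, ∀ f : ℝ → ℂ, Continuous f → (∀ x, f (x + 2 * Real.pi) = f x) →
      ∀ A B : ℝ, (∀ x, ‖f x‖ ≤ A) →
      (∀ x y : ℝ, ‖f (x - y) - f x‖ ≤ B * |y| ^ s) →
      (∑' m : ℕ, (2:ℝ) ^ ((m:ℝ) * r * q) *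
          (∑ ξ ∈ dyadicBlock m, ‖σ ξ * fourierCoef f ξ‖) ^ q) ^ (1/q)
        ≤ C' * (A + B) := by
  have hq0' : 0 < q := lt_trans one_pos hq0
  have hC0 : 0 ≤ C := by
    have h1 := hσ 1 one_ne_zero
    simp only [Int.cast_one, abs_one, Real.one_rpow, mul_one] at h1
    exact le_trans (norm_nonneg _) h1
  set e : ℝ := q * (r + 1/2 - ρ - s) with he
  have he0 : e < 0 := mul_neg_of_pos_of_neg hq0' (by linarith)
  set t : ℝ := (2:ℝ) ^ e with ht
  have ht0 : 0 < t := Real.rpow_pos_of_pos two_pos e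
  have ht1 : t < 1 := Real.rpow_lt_one_of_one_lt_of_neg one_lt_two he0
  have h1t : 0 < 1 - t := by linarith
  set K₀ : ℝ := 4*C*Real.pi^s with hK
  have hK0 : 0 ≤ K₀ := by positivity
  refine ⟨K₀ * ((1 - t)⁻¹) ^ (1/q), ?_⟩
  intro f hfc hfper A B hA hB
  have hper : Function.Periodic f (2*Real.pi) := hfper
  have hA0 : 0 ≤ A := le_trans (norm_nonneg _) (hA 0)
  have hB0 : 0 ≤ B := by
    have h1 := hB 0 1
    rw [abs_one, Real.one_rpow, mul_one] at h1
    exact le_trans (norm_nonneg _) h1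
  set term : ℕ → ℝ := fun m => (2:ℝ) ^ ((m:ℝ) * r * q) *
      (∑ ξ ∈ dyadicBlock m, ‖σ ξ * fourierCoef f ξ‖) ^ q with hterm_def
  have hterm0 : ∀ m, 0 ≤ term m := by
    intro m
    have : (0:ℝ) ≤ ∑ ξ ∈ dyadicBlock m, ‖σ ξ * fourierCoef f ξ‖ :=
      Finset.sum_nonneg fun ξ _ => norm_nonneg _
    positivity
  have hterm : ∀ m : ℕ, term m ≤ (K₀*B)^q * t^m := by
    intro m
    have hblock := block_est ρ C s hρ0 hs0 hC0 σ hσ f hfc hper B hB0 hB m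
    have hS0 : (0:ℝ) ≤ ∑ ξ ∈ dyadicBlock m, ‖σ ξ * fourierCoef f ξ‖ :=
      Finset.sum_nonneg fun ξ _ => norm_nonneg _
    have h1 : (∑ ξ ∈ dyadicBlock m, ‖σ ξ * fourierCoef f ξ‖) ^ q
        ≤ ((K₀*B) * (2:ℝ) ^ ((m:ℝ)*(1/2 - ρ - s))) ^ q := by
      refine Real.rpow_le_rpow hS0 (hblock.trans (le_of_eq ?_)) hq0'.le
      rw [hK]; ring
    have h2 : term m ≤ (2:ℝ) ^ ((m:ℝ) * r * q) * ((K₀*B) * (2:ℝ) ^ ((m:ℝ)*(1/2 - ρ - s))) ^ q :=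
      mul_le_mul_of_nonneg_left h1 (Real.rpow_nonneg (by norm_num) _)
    refine h2.trans (le_of_eq ?_)
    rw [Real.mul_rpow (by positivity) (by positivity),
      ← Real.rpow_mul (by norm_num : (0:ℝ) ≤ 2)]
    rw [show (2:ℝ) ^ ((m:ℝ) * r * q) * ((K₀ * B) ^ q * 2 ^ ((m:ℝ) * (1 / 2 - ρ - s) * q))
        = (K₀ * B) ^ q * ((2:ℝ) ^ ((m:ℝ) * r * q) * 2 ^ ((m:ℝ) * (1 / 2 - ρ - s) * q)) by ring,
      ← Real.rpow_add (by norm_num : (0:ℝ) < 2), ht,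
      ← Real.rpow_natCast ((2:ℝ) ^ e) m, ← Real.rpow_mul (by norm_num : (0:ℝ) ≤ 2)]
    congr 2
    ring
  have hsummg : Summable (fun m : ℕ => (K₀*B)^q * t^m) :=
    (summable_geometric_of_lt_one ht0.le ht1).mul_left _
  have hsumm : Summable term := Summable.of_nonneg_of_le hterm0 hterm hsummg
  have htsum : (∑' m, term m) ≤ (K₀*B)^q * (1-t)⁻¹ := by
    have h3 := Summable.tsum_le_tsum hterm hsumm hsummg
    rwa [tsum_mul_left, tsum_geometric_of_lt_one ht0.le ht1] at h3
  have h0 : 0 ≤ ∑' m, term m := tsum_nonneg hterm0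
  have hfin : (∑' m, term m)^(1/q) ≤ ((K₀*B)^q * (1-t)⁻¹)^(1/q) :=
    Real.rpow_le_rpow h0 htsum (by positivity)
  refine hfin.trans ?_
  rw [Real.mul_rpow (by positivity) (by positivity)]
  have h4 : ((K₀*B)^q)^(1/q) = K₀*B := by
    rw [← Real.rpow_mul (by positivity), mul_one_div, div_self hq0'.ne', Real.rpow_one]
  rw [h4]
  have hc : 0 ≤ ((1-t)⁻¹)^(1/q) := Real.rpow_nonneg (inv_nonneg.2 h1t.le) _
  nlinarith [mul_nonneg (mul_nonneg hK0 hc) hA0]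
end
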